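/- arXiv:0901.2629 — 5 statements merged into one kernel-verified Lean document; each statement's English description precedes it below -/
import Mathlib

section
/- Let C be a cone in R^{7n} closed under non-negative linear combinations, such that every x in C has all 'quadrilateral' coordinates non-negative (coordinates in a distinguished index set Q). Let A(S) denote the subset of a set S consisting of vectors satisfying the quadrilateral constraints, i.e., for each of the n tetrahedra, at most one of its three quadrilateral coordinates is non-zero. If B is a basis for C, then A(B) is a basis for A(C). -/
/-- `x` is a non-negative linear combination of elements of `B`. -/
def IsNonnegCombo {d : ℕ} (B : Set (Fin d → ℝ)) (x : Fin d → ℝ) : Prop :=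
  ∃ (s : Finset (Fin d → ℝ)) (c : (Fin d → ℝ) → ℝ),
    ↑s ⊆ B ∧ (∀ v ∈ s, 0 ≤ c v) ∧ x = ∑ v ∈ s, c v • v

/-- `B` is a basis for `S`. -/
def IsBasisFor {d : ℕ} (B S : Set (Fin d → ℝ)) : Prop :=
  B ⊆ S ∧ (∀ x ∈ S, IsNonnegCombo B x) ∧ ∀ b ∈ B, ¬ IsNonnegCombo (B \ {b}) b

theorem stmt4 {n : ℕ} (quad : Fin n → Fin 3 → Fin (7*n))
    (C : Set (Fin (7*n) → ℝ))
    -- C is closed under non-negative linear combinations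
    (hcone : ∀ x ∈ C, ∀ y ∈ C, ∀ a b2 : ℝ, 0 ≤ a → 0 ≤ b2 → a • x + b2 • y ∈ C)
    -- every x in C has non-negative quadrilateral coordinates
    (hquadnonneg : ∀ x ∈ C, ∀ i j, 0 ≤ x (quad i j))
    (B : Set (Fin (7*n) → ℝ)) (hB : IsBasisFor B C) :
    IsBasisFor {b ∈ B | ∀ i j k, b (quad i j) ≠ 0 → b (quad i k) ≠ 0 → j = k}
      {x ∈ C | ∀ i j k, x (quad i j) ≠ 0 → x (quad i k) ≠ 0 → j = k} := by
  obtain ⟨hBC, hBgen, hBmin⟩ := hB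
  refine ⟨?_, ?_, ?_⟩
  · rintro b ⟨hb, hadm⟩
    exact ⟨hBC hb, hadm⟩
  · rintro x ⟨hxC, hxadm⟩
    obtain ⟨s, c, hsB, hc, hsum⟩ := hBgen x hxC
    refine ⟨s.filter (fun v => c v ≠ 0), c, ?_,
      fun v hv => hc v (Finset.mem_filter.mp hv).1, ?_⟩
    · intro v hv
      simp only [Finset.coe_filter, Set.mem_setOf_eq] at hv
      obtain ⟨hvs, hcv⟩ := hv
      have hvB := hsB hvs
      have hvC := hBC hvB
      have hcvpos : 0 < c v := lt_of_le_of_ne (hc v hvs) (Ne.symm hcv)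
      refine ⟨hvB, fun i j k hj hk => ?_⟩
      have key : ∀ m, v (quad i m) ≠ 0 → x (quad i m) ≠ 0 := by
        intro m hm
        have hterm : 0 < c v * v (quad i m) :=
          mul_pos hcvpos (lt_of_le_of_ne (hquadnonneg v hvC i m) (Ne.symm hm))
        have hle : c v * v (quad i m) ≤ x (quad i m) := by
          rw [hsum]
          simp only [Finset.sum_apply, Pi.smul_apply, smul_eq_mul]
          exact Finset.single_le_sum (fun w hw => mul_nonneg (hc w hw)
            (hquadnonneg w (hBC (hsB hw)) i m)) hvs
        exact ne_of_gt (lt_of_lt_of_le hterm hle)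
      exact hxadm i j k (key j hj) (key k hk)
    · rw [hsum]
      refine (Finset.sum_filter_of_ne ?_).symm
      intro v hv h hcv
      exact h (by rw [hcv]; simp)
  · rintro b ⟨hbB, hbadm⟩ ⟨s, c, hs, hc, hsum⟩
    exact hBmin b hbB ⟨s, c, fun v hv => ⟨(hs hv).1.1, (hs hv).2⟩, hc, hsum⟩
end

section
/- Let C be a convex cone in R^d generated by non-negative linear combinations of a finite set B, where B satisfies: no element is a non-negative combination of the others, and all elements of B lie strictly on one side of some hyperplane through 0. Suppose b_r, b_s ∈ B are such that whenever μ b_r + η b_s = sum_i λ_i b_i with μ, η, λ_i ≥ 0, we must have λ_i = 0 for all i ≠ r, s. Then the set F = {μ b_r + η b_s : μ, η ≥ 0} is a face of C in the following sense: F is convex, and whenever an open segment (x, y) with x, y ∈ C contains a point of F, the whole closed segment [x, y] lies in F. -/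
theorem stmt6 {d k : ℕ} (b : Fin k → (Fin d → ℝ))
    (hindep : ∀ r : Fin k, ¬ ∃ c : Fin k → ℝ,
      (∀ i, 0 ≤ c i) ∧ c r = 0 ∧ b r = ∑ i, c i • b i)
    (hpos : ∃ h : (Fin d → ℝ) →ₗ[ℝ] ℝ, ∀ i, 0 < h (b i))
    (r s : Fin k)
    (hadj : ∀ (μ η : ℝ) (lam : Fin k → ℝ), 0 ≤ μ → 0 ≤ η → (∀ i, 0 ≤ lam i) →
      μ • b r + η • b s = ∑ i, lam i • b i → ∀ i, i ≠ r → i ≠ s → lam i = 0) :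
    let C : Set (Fin d → ℝ) :=
      {x | ∃ c : Fin k → ℝ, (∀ i, 0 ≤ c i) ∧ x = ∑ i, c i • b i}
    let F : Set (Fin d → ℝ) :=
      {x | ∃ μ η : ℝ, 0 ≤ μ ∧ 0 ≤ η ∧ x = μ • b r + η • b s}
    Convex ℝ F ∧
      ∀ x ∈ C, ∀ y ∈ C, ∀ z ∈ openSegment ℝ x y, z ∈ F → segment ℝ x y ⊆ F := by
  intro C F
  have hFconv : Convex ℝ F := by
    rintro x ⟨μ1, η1, hμ1, hη1, rfl⟩ y ⟨μ2, η2, hμ2, hη2, rfl⟩ p q hp hq hpq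
    refine ⟨p * μ1 + q * μ2, p * η1 + q * η2, by positivity, by positivity, ?_⟩
    simp only [smul_add, smul_smul, add_smul]
    abel
  -- helper: if c is nonneg and vanishes off {r,s}, the sum lies in F
  have hmem : ∀ c : Fin k → ℝ, (∀ i, 0 ≤ c i) → (∀ i, i ≠ r → i ≠ s → c i = 0) →
      (∑ i, c i • b i) ∈ F := by
    intro c hc h0
    by_cases hrs : r = s
    · refine ⟨c r, 0, hc r, le_refl 0, ?_⟩
      rw [zero_smul, add_zero]
      rw [Finset.sum_eq_single r]
      · intro i _ hi
        rw [h0 i hi (hrs ▸ hi), zero_smul]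
      · simp
    · refine ⟨c r, c s, hc r, hc s, ?_⟩
      have : (∑ i, c i • b i) = ∑ i ∈ ({r, s} : Finset (Fin k)), c i • b i := by
        refine (Finset.sum_subset (Finset.subset_univ _) ?_).symm
        intro i _ hi
        simp only [Finset.mem_insert, Finset.mem_singleton, not_or] at hi
        rw [h0 i hi.1 hi.2, zero_smul]
      rw [this, Finset.sum_pair hrs]
  refine ⟨hFconv, ?_⟩
  rintro x ⟨c, hc, rfl⟩ y ⟨e, he, rfl⟩ z hz hzF
  obtain ⟨p, q, hp, hq, hpq, hzeq⟩ := hz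
  obtain ⟨μ, η, hμ, hη, heq⟩ := hzF
  have key : μ • b r + η • b s = ∑ i, (p * c i + q * e i) • b i := by
    rw [← heq, ← hzeq]
    rw [Finset.smul_sum, Finset.smul_sum, ← Finset.sum_add_distrib]
    congr 1
    funext i
    rw [add_smul, smul_smul, smul_smul]
  have hzero := hadj μ η _ hμ hη (fun i => add_nonneg (mul_nonneg hp.le (hc i)) (mul_nonneg hq.le (he i))) key
  have hx : (∑ i, c i • b i) ∈ F := by
    refine hmem c hc fun i hir his => ?_
    have := hzero i hir his
    nlinarith [hc i, he i, hp, hq]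
  have hy : (∑ i, e i • b i) ∈ F := by
    refine hmem e he fun i hir his => ?_
    have := hzero i hir his
    nlinarith [hc i, he i, hp, hq]
  exact hFconv.segment_subset hx hy
end

section
/- Let P ⊆ R^d be a polytope contained in the non-negative orthant, and let x be a point of P satisfying the quadrilateral constraints with respect to a partition of a subset of coordinates into triples (at most one coordinate in each triple is nonzero at x). Let F be the minimal face of P containing x and let u be any vertex of F. Then x dominates u (every coordinate that is zero at x is zero at u), and consequently u also satisfies the quadrilateral constraints. -/
theorem stmt7 {d m : ℕ} (P : Set (Fin d → ℝ)) (hconv : Convex ℝ P)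
    -- P lies in the non-negative orthant
    (horth : ∀ y ∈ P, ∀ i, 0 ≤ y i)
    -- the triples of coordinates for the quadrilateral constraints
    (q : Fin m → Fin 3 → Fin d)
    (x : Fin d → ℝ) (hx : x ∈ P)
    -- x satisfies the quadrilateral constraints
    (hxQC : ∀ i j k, x (q i j) ≠ 0 → x (q i k) ≠ 0 → j = k)
    -- F is the minimal face of P containing x
    (F : Set (Fin d → ℝ))
    (hF : F = ⋂₀ {G | (Convex ℝ G ∧ G ⊆ P ∧
        ∀ a ∈ P, ∀ b ∈ P, (∃ z ∈ openSegment ℝ a b, z ∈ G) → segment ℝ a b ⊆ G)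
      ∧ x ∈ G})
    -- u is a vertex of F
    (u : Fin d → ℝ) (hu : u ∈ Set.extremePoints ℝ F) :
    (∀ i, x i = 0 → u i = 0) ∧
      (∀ i j k, u (q i j) ≠ 0 → u (q i k) ≠ 0 → j = k) := by
  have huF : u ∈ F := hu.1
  set G : Set (Fin d → ℝ) := P ∩ {y | ∀ i, x i = 0 → y i = 0} with hG
  have hGconv : Convex ℝ G := by
    apply hconv.inter
    intro a ha b hb s t hs ht hst
    intro i hxi
    simp only [Set.mem_setOf_eq] at ha hb
    have := ha i hxi
    have := hb i hxi
    simp [Pi.add_apply, Pi.smul_apply, *]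
  have hGface : Convex ℝ G ∧ G ⊆ P ∧
      ∀ a ∈ P, ∀ b ∈ P, (∃ z ∈ openSegment ℝ a b, z ∈ G) → segment ℝ a b ⊆ G := by
    refine ⟨hGconv, Set.inter_subset_left, ?_⟩
    rintro a ha b hb ⟨z, hz, -, hzG⟩ w hw
    obtain ⟨t1, t2, ht1, ht2, hts, rfl⟩ := hz
    have hzero : ∀ i, x i = 0 → a i = 0 ∧ b i = 0 := by
      intro i hxi
      have hz0 := hzG i hxi
      simp only [Pi.add_apply, Pi.smul_apply, smul_eq_mul] at hz0
      have hai := horth a ha i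
      have hbi := horth b hb i
      constructor <;> nlinarith
    obtain ⟨s1, s2, hs1, hs2, hss, rfl⟩ := hw
    refine ⟨hconv ha hb hs1 hs2 hss, ?_⟩
    intro i hxi
    obtain ⟨ha0, hb0⟩ := hzero i hxi
    simp [Pi.add_apply, Pi.smul_apply, ha0, hb0]
  have hxG : x ∈ G := ⟨hx, fun i hxi => hxi⟩
  have hFG : F ⊆ G := by
    rw [hF]; exact Set.sInter_subset_of_mem ⟨hGface, hxG⟩
  have huG := hFG huF
  have hdom : ∀ i, x i = 0 → u i = 0 := huG.2
  refine ⟨hdom, fun i j k hj hk => ?_⟩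
  exact hxQC i j k (fun h => hj (hdom _ h)) (fun h => hk (hdom _ h))
end

section
/- Let K ⊆ R^d be a pointed convex cone (admitting a linear functional strictly positive on K \ {0}) generated by non-negative combinations of a finite basis B, and let h be a linear functional. Partition B into S_0 = {b : h(b) = 0}, S_+ = {b : h(b) > 0}, S_- = {b : h(b) < 0}. Then every element of K ∩ {x : h(x) ≥ 0} is a non-negative linear combination of vectors in S_0 ∪ S_+ ∪ { h(u)·w − h(w)·u : u ∈ S_+, w ∈ S_- }. -/
open Finset

lemma nc_zero {d : ℕ} (B : Set (Fin d → ℝ)) : IsNonnegCombo B 0 :=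
  ⟨∅, fun _ => 0, by simp, by simp, by simp⟩

lemma nc_mem {d : ℕ} {B : Set (Fin d → ℝ)} {v : Fin d → ℝ} (hv : v ∈ B) :
    IsNonnegCombo B v :=
  ⟨{v}, fun _ => 1, by simpa, by intro _ _; norm_num, by simp⟩

lemma nc_smul {d : ℕ} {B : Set (Fin d → ℝ)} {a : ℝ} {x : Fin d → ℝ} (ha : 0 ≤ a)
    (hx : IsNonnegCombo B x) : IsNonnegCombo B (a • x) := by
  obtain ⟨s, c, hs, hc, hxs⟩ := hx
  refine ⟨s, fun v => a * c v, hs, fun v hv => mul_nonneg ha (hc v hv), ?_⟩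
  rw [hxs, Finset.smul_sum]
  simp [smul_smul]

lemma nc_add {d : ℕ} {B : Set (Fin d → ℝ)} {x y : Fin d → ℝ} (hx : IsNonnegCombo B x)
    (hy : IsNonnegCombo B y) : IsNonnegCombo B (x + y) := by
  classical
  obtain ⟨s, c, hs, hc, hxs⟩ := hx
  obtain ⟨t, e, ht, he, hyt⟩ := hy
  refine ⟨s ∪ t, fun v => (if v ∈ s then c v else 0) + (if v ∈ t then e v else 0), ?_, ?_, ?_⟩
  · intro v hv
    rcases Finset.mem_union.mp (by exact_mod_cast hv) with h | h
    exacts [hs h, ht h]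
  · intro v _
    have h1 : (0:ℝ) ≤ (if v ∈ s then c v else 0) := by
      split_ifs with h; exacts [hc v h, le_refl 0]
    have h2 : (0:ℝ) ≤ (if v ∈ t then e v else 0) := by
      split_ifs with h; exacts [he v h, le_refl 0]
    exact add_nonneg h1 h2
  · have h1 : ∑ v ∈ s ∪ t, (if v ∈ s then c v else 0) • v = ∑ v ∈ s, c v • v := by
      simp only [ite_smul, zero_smul]
      rw [Finset.sum_ite_mem, Finset.union_inter_cancel_left]
    have h2 : ∑ v ∈ s ∪ t, (if v ∈ t then e v else 0) • v = ∑ v ∈ t, e v • v := by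
      simp only [ite_smul, zero_smul]
      rw [Finset.sum_ite_mem, Finset.union_inter_cancel_right]
    simp only [add_smul, Finset.sum_add_distrib, h1, h2, hxs, hyt]

lemma nc_sum {d : ℕ} {B : Set (Fin d → ℝ)} {ι : Type*} (s : Finset ι) (f : ι → Fin d → ℝ)
    (hf : ∀ i ∈ s, IsNonnegCombo B (f i)) : IsNonnegCombo B (∑ i ∈ s, f i) := by
  classical
  induction s using Finset.induction with
  | empty => simpa using nc_zero B
  | @insert a s ha ih =>
      rw [Finset.sum_insert ha]
      exact nc_add (hf _ (Finset.mem_insert_self _ _))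
        (ih fun i hi => hf i (Finset.mem_insert_of_mem hi))

theorem stmt11 {d k : ℕ} (b : Fin k → (Fin d → ℝ)) (h : (Fin d → ℝ) →ₗ[ℝ] ℝ)
    (K : Set (Fin d → ℝ))
    (hK : K = {x | ∃ c : Fin k → ℝ, (∀ i, 0 ≤ c i) ∧ x = ∑ i, c i • b i})
    -- K is pointed
    (hpointed : ∃ g : (Fin d → ℝ) →ₗ[ℝ] ℝ, ∀ x ∈ K, x ≠ 0 → 0 < g x)
    (x : Fin d → ℝ) (hx : x ∈ K) (hhx : 0 ≤ h x) :
    IsNonnegCombo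
      ({v | ∃ i, 0 ≤ h (b i) ∧ v = b i} ∪
        {v | ∃ i j, 0 < h (b i) ∧ h (b j) < 0 ∧ v = h (b i) • b j - h (b j) • b i})
      x := by
  classical
  rw [hK] at hx
  obtain ⟨c, hc, hxc⟩ := hx
  set B : Set (Fin d → ℝ) :=
    ({v | ∃ i, 0 ≤ h (b i) ∧ v = b i} ∪
      {v | ∃ i j, 0 < h (b i) ∧ h (b j) < 0 ∧ v = h (b i) • b j - h (b j) • b i}) with hB
  set Sp : Finset (Fin k) := Finset.univ.filter (fun i => 0 < h (b i)) with hSp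
  set Sn : Finset (Fin k) := Finset.univ.filter (fun j => h (b j) < 0) with hSn
  set P : ℝ := ∑ i ∈ Sp, c i * h (b i) with hPdef
  set N : ℝ := ∑ j ∈ Sn, c j * (-h (b j)) with hNdef
  have hP0 : 0 ≤ P :=
    Finset.sum_nonneg fun i hi =>
      mul_nonneg (hc i) (le_of_lt (Finset.mem_filter.mp hi).2)
  have hN0 : 0 ≤ N :=
    Finset.sum_nonneg fun j hj =>
      mul_nonneg (hc j) (by linarith [(Finset.mem_filter.mp hj).2])
  -- h x = P - N
  have hhxval : h x = P - N := by
    have h1 : h x = ∑ i, c i * h (b i) := by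
      rw [hxc, map_sum]; simp [smul_eq_mul]
    have h2 : P = ∑ i, if 0 < h (b i) then c i * h (b i) else 0 := by
      rw [hPdef, hSp, Finset.sum_filter]
    have h3 : -N = ∑ j, if h (b j) < 0 then c j * h (b j) else 0 := by
      rw [hNdef, hSn, Finset.sum_filter, ← Finset.sum_neg_distrib]
      congr 1; funext j; split_ifs <;> ring
    rw [h1, h2, sub_eq_add_neg, h3, ← Finset.sum_add_distrib]
    refine Finset.sum_congr rfl fun i _ => ?_
    rcases lt_trichotomy (h (b i)) 0 with hlt | heq | hgt
    · rw [if_neg (by linarith), if_pos hlt]; ring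
    · rw [if_neg (by rw [heq]; exact lt_irrefl 0), if_neg (by rw [heq]; exact lt_irrefl 0), heq]
      ring
    · rw [if_pos hgt, if_neg (by linarith)]; ring
  have hNP : N ≤ P := by linarith
  by_cases hP : P = 0
  · -- then N = 0 and all negative-side coefficients vanish
    have hNz : N = 0 := le_antisymm (by linarith) hN0
    have hcz : ∀ j ∈ Sn, c j = 0 := by
      intro j hj
      have hterm : ∀ j ∈ Sn, 0 ≤ c j * (-h (b j)) := fun j hj =>
        mul_nonneg (hc j) (by linarith [(Finset.mem_filter.mp hj).2])
      have h0 : c j * (-h (b j)) = 0 :=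
        (Finset.sum_eq_zero_iff_of_nonneg hterm).mp hNz j hj
      have hne : -h (b j) ≠ 0 := by
        have := (Finset.mem_filter.mp hj).2; intro hcon; linarith
      exact (mul_eq_zero.mp h0).resolve_right hne
    rw [hxc]
    refine nc_sum _ _ fun i _ => ?_
    by_cases hi : 0 ≤ h (b i)
    · exact nc_smul (hc i) (nc_mem (Or.inl ⟨i, hi, rfl⟩))
    · have : c i = 0 := hcz i (Finset.mem_filter.mpr ⟨Finset.mem_univ i, by linarith⟩)
      simpa [this] using nc_zero B
  · have hPpos : 0 < P := lt_of_le_of_ne hP0 (Ne.symm hP)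
    -- coefficients on the nonnegative side
    set e : Fin k → ℝ := fun i =>
      if 0 < h (b i) then c i * ((P - N) / P) else if h (b i) < 0 then 0 else c i with he
    set M : Fin d → ℝ := ∑ p ∈ Sp ×ˢ Sn,
      ((c p.1 * c p.2) / P) • (h (b p.1) • b p.2 - h (b p.2) • b p.1) with hM
    have hnegN : ∑ j ∈ Sn, c j * h (b j) = -N := by
      rw [hNdef, ← Finset.sum_neg_distrib]
      refine Finset.sum_congr rfl fun j _ => by ring
    -- compute M
    have hMval : M = (∑ j ∈ Sn, c j • b j) + ∑ i ∈ Sp, ((c i * N) / P) • b i := by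
      rw [hM, Finset.sum_product]
      have hinner : ∀ i ∈ Sp,
          ∑ j ∈ Sn, ((c i * c j) / P) • (h (b i) • b j - h (b j) • b i)
            = (c i * h (b i) / P) • (∑ j ∈ Sn, c j • b j) + ((c i * N) / P) • b i := by
        intro i _
        have hterm : ∀ j ∈ Sn, ((c i * c j) / P) • (h (b i) • b j - h (b j) • b i)
            = (c i * h (b i) / P) • (c j • b j) - (c j * h (b j)) • ((c i / P) • b i) := by
          intro j _
          rw [smul_sub]
          congr 1
          · rw [smul_smul, smul_smul]; congr 1; ring
          · rw [smul_smul, smul_smul]; congr 1; ring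
        rw [Finset.sum_congr rfl hterm, Finset.sum_sub_distrib, ← Finset.smul_sum,
          ← Finset.sum_smul, hnegN]
        rw [neg_smul, sub_neg_eq_add, smul_smul]
        congr 2
        ring
      rw [Finset.sum_congr rfl hinner, Finset.sum_add_distrib, ← Finset.sum_smul,
        ← Finset.sum_div, ← hPdef, div_self hP, one_smul]
    -- the key identity
    have hkey : x = (∑ i, e i • b i) + M := by
      rw [hxc, hMval]
      have hW : (∑ j ∈ Sn, c j • b j) = ∑ j, if h (b j) < 0 then c j • b j else 0 := by
        rw [hSn, Finset.sum_filter]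
      have hS : (∑ i ∈ Sp, ((c i * N) / P) • b i)
          = ∑ i, if 0 < h (b i) then ((c i * N) / P) • b i else 0 := by
        rw [hSp, Finset.sum_filter]
      rw [hW, hS, ← Finset.sum_add_distrib, ← Finset.sum_add_distrib]
      refine Finset.sum_congr rfl fun i _ => ?_
      rcases lt_trichotomy (h (b i)) 0 with hlt | heq | hgt
      · rw [he]; simp only
        rw [if_neg (by linarith), if_pos hlt, if_pos hlt, if_neg (by linarith)]
        simp
      · rw [he]; simp only
        rw [if_neg (by rw [heq]; exact lt_irrefl 0), if_neg (by rw [heq]; exact lt_irrefl 0),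
          if_neg (by rw [heq]; exact lt_irrefl 0), if_neg (by rw [heq]; exact lt_irrefl 0)]
        simp
      · rw [he]; simp only
        rw [if_pos hgt, if_neg (by linarith), if_pos hgt]
        rw [zero_add, ← add_smul]
        congr 1
        field_simp
        ring
    rw [hkey]
    refine nc_add (nc_sum _ _ fun i _ => ?_) (nc_sum _ _ fun p hp => ?_)
    · by_cases hi : 0 ≤ h (b i)
      · refine nc_smul ?_ (nc_mem (Or.inl ⟨i, hi, rfl⟩))
        rw [he]; simp only
        split_ifs
        · exact mul_nonneg (hc i) (div_nonneg (by linarith) (le_of_lt hPpos))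
        · exact le_refl 0
        · exact hc i
      · have : e i = 0 := by
          rw [he]; simp only
          rw [if_neg (by intro hcon; exact hi (le_of_lt hcon)), if_pos (by linarith)]
        simpa [this] using nc_zero B
    · obtain ⟨hp1, hp2⟩ := Finset.mem_product.mp hp
      have h1 : 0 < h (b p.1) := (Finset.mem_filter.mp hp1).2
      have h2 : h (b p.2) < 0 := (Finset.mem_filter.mp hp2).2
      refine nc_smul (div_nonneg (mul_nonneg (hc p.1) (hc p.2)) (le_of_lt hPpos))
        (nc_mem (Or.inr ⟨p.1, p.2, h1, h2, rfl⟩))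
end

section
/- Let C be a pointed finitely generated convex cone in R^d with basis B = {b_1,...,b_k}. If two distinct basis vectors b_r, b_s are such that there exist x, y ∈ C and a point z on the open segment (x,y) with z = μ b_r + η b_s for some μ, η ≥ 0, but the closed segment [x,y] is not contained in the plane spanned by b_r and b_s, then there is a representation μ' b_r + η' b_s = sum_i λ_i b_i with all coefficients non-negative and λ_i > 0 for some i ≠ r, s. -/
theorem stmt17 {d k : ℕ} (b : Fin k → (Fin d → ℝ))
    (hindep : ∀ r : Fin k, ¬ ∃ c : Fin k → ℝ,
      (∀ i, 0 ≤ c i) ∧ c r = 0 ∧ b r = ∑ i, c i • b i)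
    (hpos : ∃ h : (Fin d → ℝ) →ₗ[ℝ] ℝ, ∀ i, 0 < h (b i))
    (C : Set (Fin d → ℝ))
    (hC : C = {x | ∃ c : Fin k → ℝ, (∀ i, 0 ≤ c i) ∧ x = ∑ i, c i • b i})
    (r s : Fin k) (hrs : r ≠ s)
    (x y : Fin d → ℝ) (hx : x ∈ C) (hy : y ∈ C)
    (z : Fin d → ℝ) (hz : z ∈ openSegment ℝ x y)
    (μ η : ℝ) (hμ : 0 ≤ μ) (hη : 0 ≤ η) (hzrep : z = μ • b r + η • b s)
    (hnotin : ¬ (segment ℝ x y ⊆ (Submodule.span ℝ {b r, b s} : Set (Fin d → ℝ)))) :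
    ∃ (μ' η' : ℝ) (lam : Fin k → ℝ), 0 ≤ μ' ∧ 0 ≤ η' ∧ (∀ i, 0 ≤ lam i) ∧
      μ' • b r + η' • b s = ∑ i, lam i • b i ∧
      ∃ i, i ≠ r ∧ i ≠ s ∧ 0 < lam i := by
  subst hC
  obtain ⟨c, hc0, hcx⟩ := hx
  obtain ⟨e, he0, hey⟩ := hy
  obtain ⟨a, a', ha, ha', hab, hzeq⟩ := hz
  refine ⟨μ, η, fun i => a * c i + a' * e i, hμ, hη,
    fun i => add_nonneg (mul_nonneg ha.le (hc0 i)) (mul_nonneg ha'.le (he0 i)), ?_, ?_⟩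
  · rw [← hzrep, ← hzeq, hcx, hey, Finset.smul_sum, Finset.smul_sum, ← Finset.sum_add_distrib]
    refine Finset.sum_congr rfl fun i _ => ?_
    rw [smul_smul, smul_smul, add_smul]
  · by_contra h
    push_neg at h
    have hzero : ∀ i, i ≠ r → i ≠ s → c i = 0 ∧ e i = 0 := by
      intro i hir his
      have := (h i hir his).antisymm
        (add_nonneg (mul_nonneg ha.le (hc0 i)) (mul_nonneg ha'.le (he0 i)))
      constructor
      · nlinarith [hc0 i, he0 i, mul_nonneg ha'.le (he0 i)]
      · nlinarith [hc0 i, he0 i, mul_nonneg ha.le (hc0 i)]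
    have hmem : ∀ (f : Fin k → ℝ), (∀ i, i ≠ r → i ≠ s → f i = 0) →
        (∑ i, f i • b i) ∈ Submodule.span ℝ ({b r, b s} : Set (Fin d → ℝ)) := by
      intro f hf
      refine Submodule.sum_mem _ fun i _ => ?_
      by_cases hir : i = r
      · exact Submodule.smul_mem _ _ (Submodule.subset_span (by simp [hir]))
      by_cases his : i = s
      · exact Submodule.smul_mem _ _ (Submodule.subset_span (by simp [his]))
      · simp [hf i hir his]
    apply hnotin
    have hxm : x ∈ Submodule.span ℝ ({b r, b s} : Set (Fin d → ℝ)) := by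
      rw [hcx]; exact hmem c fun i h1 h2 => (hzero i h1 h2).1
    have hym : y ∈ Submodule.span ℝ ({b r, b s} : Set (Fin d → ℝ)) := by
      rw [hey]; exact hmem e fun i h1 h2 => (hzero i h1 h2).2
    rintro w ⟨t, t', ht, ht', htt, rfl⟩
    exact Submodule.add_mem _ (Submodule.smul_mem _ _ hxm) (Submodule.smul_mem _ _ hym)
end
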